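/- Let V be a finite set with |V| = n ≥ 2, let ℓ > 0, and let d be the metric on V with d(u,v) = ℓ for all u ≠ v. For each point i take N(i) = V∖{i}, and let 0 < t < (n−1)/n. Then for all distinct i, j in V, W(D_{t,i}, D_{t,j}) = ℓ·(1 − n·t/(n−1)), and consequently Σ_{unordered pairs {i,j} of distinct points} ( 1 − W(D_{t,i}, D_{t,j})/d(i,j) ) = (n²/2)·t. -/

import Mathlib

open Finset

/-- `A` is a coupling of the probability distributions `μ` and `ν`. -/
def IsCoupling {V : Type*} [Fintype V] (μ ν : V → ℝ) (A : V → V → ℝ) : Prop :=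
  (∀ u v, 0 ≤ A u v) ∧ (∀ u, ∑ v, A u v = μ u) ∧ (∀ v, ∑ u, A u v = ν v)

/-- The Wasserstein (transportation) cost between two probability distributions on a
finite metric space: the infimum (= minimum) over all couplings of the transport cost. -/
noncomputable def Wcost {V : Type*} [Fintype V] [MetricSpace V] (μ ν : V → ℝ) : ℝ :=
  sInf {c : ℝ | ∃ A : V → V → ℝ, IsCoupling μ ν A ∧ c = ∑ u, ∑ v, A u v * dist u v}

/-- `dd N i = Σ_{k ∈ N} d(i,k)^{-2}`. -/
noncomputable def dd {V : Type*} [MetricSpace V] (N : Finset V) (i : V) : ℝ :=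
  ∑ k ∈ N, ((dist i k)⁻¹) ^ 2

/-- `cc N i = Σ_{k ∈ N} d(i,k)^{-1}`. -/
noncomputable def cc {V : Type*} [MetricSpace V] (N : Finset V) (i : V) : ℝ :=
  ∑ k ∈ N, (dist i k)⁻¹

/-- The probability distribution `D_{t,i}` concentrated at `i` with mass `t` spread on the
neighbor set `N`. -/
noncomputable def Dprob {V : Type*} [MetricSpace V] [DecidableEq V]
    (N : Finset V) (t : ℝ) (i : V) : V → ℝ := fun v =>
  if v = i then 1 - t else if v ∈ N then t * ((dist i v)⁻¹) ^ 2 / dd N i else 0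

section Aux

variable {V : Type*} [Fintype V] [MetricSpace V] [DecidableEq V]

lemma Dprob_uniform (hn : 2 ≤ Fintype.card V) {l : ℝ} (hl : 0 < l)
    (hd : ∀ u v : V, u ≠ v → dist u v = l) (t : ℝ) (i v : V) :
    Dprob (Finset.univ.erase i) t i v =
      if v = i then 1 - t else t / ((Fintype.card V : ℝ) - 1) := by
  have hn2 : (2:ℝ) ≤ (Fintype.card V : ℝ) := by exact_mod_cast hn
  have hcard : ((Fintype.card V - 1 : ℕ) : ℝ) = (Fintype.card V : ℝ) - 1 := by
    have h1 : (1:ℕ) ≤ Fintype.card V := by omega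
    push_cast [h1]; ring
  have hdd : dd (Finset.univ.erase i) i = ((Fintype.card V : ℝ) - 1) * (l⁻¹) ^ 2 := by
    unfold dd
    rw [Finset.sum_congr rfl fun k hk => by
      rw [hd i k (Ne.symm (Finset.ne_of_mem_erase hk))]]
    rw [Finset.sum_const, Finset.card_erase_of_mem (Finset.mem_univ i), Finset.card_univ,
      nsmul_eq_mul, hcard]
  unfold Dprob
  by_cases h : v = i
  · simp [h]
  · have hv : v ∈ Finset.univ.erase i := Finset.mem_erase.2 ⟨h, Finset.mem_univ v⟩
    have hne1 : ((Fintype.card V : ℝ) - 1) ≠ 0 := by linarith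
    rw [if_neg h, if_neg h, if_pos hv, hdd, hd i v fun hh => h hh.symm]
    field_simp

lemma Dprob_sum_one (hn : 2 ≤ Fintype.card V) {l : ℝ} (hl : 0 < l)
    (hd : ∀ u v : V, u ≠ v → dist u v = l) (t : ℝ) (i : V) :
    ∑ v, Dprob (Finset.univ.erase i) t i v = 1 := by
  have hn2 : (2:ℝ) ≤ (Fintype.card V : ℝ) := by exact_mod_cast hn
  have hne1 : ((Fintype.card V : ℝ) - 1) ≠ 0 := by linarith
  have hcard : ((Fintype.card V - 1 : ℕ) : ℝ) = (Fintype.card V : ℝ) - 1 := by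
    have h1 : (1:ℕ) ≤ Fintype.card V := by omega
    push_cast [h1]; ring
  simp_rw [Dprob_uniform hn hl hd t i]
  rw [← Finset.add_sum_erase _ _ (Finset.mem_univ i), if_pos rfl,
    Finset.sum_congr rfl (fun k hk => if_neg (Finset.mem_erase.1 hk).1),
    Finset.sum_const, Finset.card_erase_of_mem (Finset.mem_univ i), Finset.card_univ,
    nsmul_eq_mul, hcard]
  field_simp
  ring

lemma wcost_uniform (hn : 2 ≤ Fintype.card V) {l : ℝ} (hl : 0 < l)
    (hd : ∀ u v : V, u ≠ v → dist u v = l) {t : ℝ} (ht0 : 0 < t)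
    (ht1 : t < ((Fintype.card V : ℝ) - 1) / (Fintype.card V : ℝ)) {i j : V} (hij : i ≠ j) :
    Wcost (Dprob (Finset.univ.erase i) t i) (Dprob (Finset.univ.erase j) t j) =
      l * (1 - (Fintype.card V : ℝ) * t / ((Fintype.card V : ℝ) - 1)) := by
  set nR := (Fintype.card V : ℝ) with hnR
  have hn2 : (2:ℝ) ≤ nR := by rw [hnR]; exact_mod_cast hn
  have hn1 : 0 < nR - 1 := by linarith
  have hnpos : 0 < nR := by linarith
  set m := t / (nR - 1) with hm
  have hm0 : 0 ≤ m := div_nonneg ht0.le hn1.le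
  have hmul : t * nR < nR - 1 := (lt_div_iff₀ hnpos).1 ht1
  have htm : 0 ≤ 1 - t - m := by
    have : m ≤ 1 - t := by rw [hm, div_le_iff₀ hn1]; nlinarith
    linarith
  set μ := Dprob (Finset.univ.erase i) t i with hμ
  set ν := Dprob (Finset.univ.erase j) t j with hν
  have hμe : ∀ v, μ v = if v = i then 1 - t else m := Dprob_uniform hn hl hd t i
  have hνe : ∀ v, ν v = if v = j then 1 - t else m := Dprob_uniform hn hl hd t j
  have hμ1 : ∑ v, μ v = 1 := Dprob_sum_one hn hl hd t i
  have hnm : nR * m = nR * t / (nR - 1) := by rw [hm]; ring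
  have htgt : l * (1 - nR * t / (nR - 1)) = (1 - t - m) * l := by
    rw [← hnm, hm]; field_simp; ring
  -- the optimal coupling
  set A : V → V → ℝ := fun u v =>
    if u = v then m else if u = i ∧ v = j then 1 - t - m else 0 with hA
  have hAc : IsCoupling μ ν A := by
    refine ⟨fun u v => ?_, fun u => ?_, fun v => ?_⟩
    · rw [hA]; dsimp only; split_ifs <;> linarith
    · by_cases hu : u = i
      · rw [Fintype.sum_eq_add i j hij (fun c hc => by
          simp [hA, hu, Ne.symm hc.1, hc.2])]
        simp only [hA, hu]
        simp [hij, hμe]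
      · rw [Fintype.sum_eq_single u (fun c hc => by
          simp [hA, Ne.symm hc, hu])]
        simp [hA, hμe, hu]
    · by_cases hv : v = j
      · rw [Fintype.sum_eq_add j i (Ne.symm hij) (fun c hc => by
          simp [hA, hv, hc.1, hc.2])]
        simp only [hA, hv]
        simp [hij, hνe]
      · rw [Fintype.sum_eq_single v (fun c hc => by
          simp [hA, hc, hv])]
        simp [hA, hνe, hv]
  have hAcost : ∑ u, ∑ v, A u v * dist u v = (1 - t - m) * l := by
    rw [Fintype.sum_eq_single i (fun u hu => ?_)]
    · rw [Fintype.sum_eq_single j (fun v hv => ?_)]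
      · simp [hA, hij, hd i j hij]
      · by_cases hvi : v = i
        · simp [hvi, hA]
        · simp [hA, Ne.symm hvi, hv]
    · apply Finset.sum_eq_zero
      intro v _
      by_cases hvu : v = u
      · simp [hvu]
      · simp [hA, Ne.symm hvu, hu]
  have hmem : l * (1 - nR * t / (nR - 1)) ∈
      {c : ℝ | ∃ A : V → V → ℝ, IsCoupling μ ν A ∧ c = ∑ u, ∑ v, A u v * dist u v} :=
    ⟨A, hAc, by rw [hAcost, htgt]⟩
  have hlb : ∀ c ∈ {c : ℝ | ∃ A : V → V → ℝ, IsCoupling μ ν A ∧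
      c = ∑ u, ∑ v, A u v * dist u v}, l * (1 - nR * t / (nR - 1)) ≤ c := by
    rintro c ⟨B, ⟨hB0, hBr, hBc⟩, rfl⟩
    have hrow : ∀ u, ∑ v, B u v * dist u v = l * (μ u - B u u) := by
      intro u
      rw [← Finset.add_sum_erase _ _ (Finset.mem_univ u), dist_self, mul_zero, zero_add,
        Finset.sum_congr rfl (fun v hv => by
          rw [hd u v (Ne.symm (Finset.ne_of_mem_erase hv))]),
        ← Finset.sum_mul, Finset.sum_erase_eq_sub (Finset.mem_univ u), hBr u]
      ring
    have hdiag : ∀ u, B u u ≤ m := by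
      intro u
      by_cases hu : u = i
      · have h2 := Finset.single_le_sum (f := fun u' => B u' i)
          (fun u' _ => hB0 u' i) (Finset.mem_univ i)
        rw [hBc i, hνe i, if_neg hij] at h2
        rw [hu]
        exact h2
      · have := Finset.single_le_sum (f := fun v => B u v)
          (fun v _ => hB0 u v) (Finset.mem_univ u)
        rw [hBr u] at this
        rw [hμe u, if_neg hu] at this
        exact this
    have hsumdiag : ∑ u, B u u ≤ nR * m := by
      calc ∑ u, B u u ≤ ∑ _u : V, m := Finset.sum_le_sum fun u _ => hdiag u
        _ = nR * m := by rw [Finset.sum_const, Finset.card_univ, nsmul_eq_mul]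
    calc l * (1 - nR * t / (nR - 1)) = l * (1 - nR * m) := by rw [hnm]
      _ ≤ l * (1 - ∑ u, B u u) := by
          apply mul_le_mul_of_nonneg_left _ hl.le
          linarith
      _ = ∑ u, ∑ v, B u v * dist u v := by
          simp_rw [hrow, ← Finset.mul_sum, Finset.sum_sub_distrib, hμ1]
  exact le_antisymm (csInf_le ⟨_, hlb⟩ hmem) (le_csInf ⟨_, hmem⟩ hlb)

end Aux

theorem complete_graph_constant_setting_action {V : Type*} [Fintype V] [MetricSpace V]
    [DecidableEq V] (hn : 2 ≤ Fintype.card V)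
    (l : ℝ) (hl : 0 < l) (hd : ∀ u v : V, u ≠ v → dist u v = l)
    (t : ℝ) (ht0 : 0 < t) (ht1 : t < ((Fintype.card V : ℝ) - 1) / (Fintype.card V : ℝ))
    (F : Sym2 V → ℝ)
    (hF : ∀ i j : V, i ≠ j → F s(i, j) =
      1 - Wcost (Dprob (Finset.univ.erase i) t i) (Dprob (Finset.univ.erase j) t j) / dist i j) :
    (∀ i j : V, i ≠ j →
      Wcost (Dprob (Finset.univ.erase i) t i) (Dprob (Finset.univ.erase j) t j) =
        l * (1 - (Fintype.card V : ℝ) * t / ((Fintype.card V : ℝ) - 1))) ∧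
    ∑ e ∈ Finset.univ.filter (fun e : Sym2 V => ¬ e.IsDiag), F e =
      ((Fintype.card V : ℝ) ^ 2 / 2) * t := by
  have hn2 : (2:ℝ) ≤ (Fintype.card V : ℝ) := by exact_mod_cast hn
  have hne1 : ((Fintype.card V : ℝ) - 1) ≠ 0 := by linarith
  refine ⟨fun i j hij => wcost_uniform hn hl hd ht0 ht1 hij, ?_⟩
  have hc : ∀ e ∈ Finset.univ.filter (fun e : Sym2 V => ¬ e.IsDiag),
      F e = (Fintype.card V : ℝ) * t / ((Fintype.card V : ℝ) - 1) := by
    intro e he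
    simp only [Finset.mem_filter, Finset.mem_univ, true_and] at he
    induction e using Sym2.inductionOn with
    | hf a b =>
      have hab : a ≠ b := by simpa using he
      rw [hF a b hab, wcost_uniform hn hl hd ht0 ht1 hab, hd a b hab]
      field_simp
      ring
  rw [Finset.sum_congr rfl hc, Finset.sum_const, nsmul_eq_mul]
  have hcard : (Finset.univ.filter (fun e : Sym2 V => ¬ e.IsDiag)).card =
      (Fintype.card V).choose 2 := by
    rw [← Fintype.card_subtype]
    exact Sym2.card_subtype_not_diag
  rw [hcard, Nat.cast_choose_two]
  field_simp
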